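/- arXiv:1610.01289 — 2 statements merged into one kernel-verified Lean document; each statement's English description precedes it below -/
import Mathlib

section
/- Let p > 1 and suppose φ : ℝ → ℝ is a C¹ positive even function satisfying −(z/2)φ'(z) − φ(z)/(p−1) + φ(z)^p = 0 for all z, with φ(0) = (p−1)^{-1/(p-1)}. Then there exists b ∈ ℝ such that φ(z) = (p − 1 + b z²)^{-1/(p-1)} for all z; and φ is bounded and nonconstant only if b > 0. -/
open Real Set

theorem profile_ode_classification (p : ℝ) (hp : 1 < p) (φ : ℝ → ℝ)
    (hC1 : ContDiff ℝ 1 φ) (hpos : ∀ z, 0 < φ z) (heven : ∀ z, φ (-z) = φ z)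
    (hode : ∀ z : ℝ, -(z/2) * deriv φ z - φ z / (p-1) + φ z ^ p = 0)
    (h0 : φ 0 = (p-1) ^ (-(1/(p-1)))) :
    ∃ b : ℝ, (∀ z : ℝ, φ z = (p - 1 + b*z^2) ^ (-(1/(p-1))))
      ∧ ((∃ C : ℝ, ∀ z, |φ z| ≤ C) → (¬ ∃ c : ℝ, ∀ z, φ z = c) → 0 < b) := by
  have hq : 0 < p - 1 := by linarith
  set q := p - 1 with hqdef
  have hqne : q ≠ 0 := ne_of_gt hq
  have hdiff : Differentiable ℝ φ := hC1.differentiable one_ne_zero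
  set u : ℝ → ℝ := fun z => φ z ^ (-q) - q with hu
  -- u 0 = 0
  have hu0 : u 0 = 0 := by
    have : ((q : ℝ) ^ (-(1/q))) ^ (-q) = q := by
      rw [← Real.rpow_mul hq.le]
      have : -(1/q) * -q = 1 := by field_simp
      rw [this, Real.rpow_one]
    simp only [hu, h0, this, sub_self]
  -- derivative of u
  have hdu : ∀ z : ℝ, z ≠ 0 → HasDerivAt u (2 * u z / z) z := by
    intro z hz
    have h2 : HasDerivAt (fun y : ℝ => y ^ (-q)) (-q * φ z ^ (-q - 1)) (φ z) :=
      Real.hasDerivAt_rpow_const (Or.inl (hpos z).ne')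
    have h1 : HasDerivAt (fun x => φ x ^ (-q)) (-q * φ z ^ (-q - 1) * deriv φ z) z :=
      h2.comp z (hdiff z).hasDerivAt
    have h3 : HasDerivAt u (-q * φ z ^ (-q - 1) * deriv φ z) z := h1.sub_const q
    convert h3 using 1
    -- algebra: 2 * u z / z = -q * φ z ^ (-q-1) * deriv φ z
    set A := φ z with hA
    set d := deriv φ z with hd
    have hode' : z * d * q = 2 * q * A ^ p - 2 * A := by
      have h := hode z
      field_simp at h
      linarith
    have e1 : A ^ (-q - 1) * A ^ p = 1 := by
      rw [← Real.rpow_add (hpos z)]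
      have : -q - 1 + p = 0 := by rw [hqdef]; ring
      rw [this, Real.rpow_zero]
    have e2 : A ^ (-q - 1) * A = A ^ (-q) := by
      nth_rewrite 2 [← Real.rpow_one A]
      rw [← Real.rpow_add (hpos z)]
      ring_nf
      rfl
    have huz : u z = A ^ (-q) - q := rfl
    rw [huz, eq_comm, eq_div_iff hz]
    linear_combination (-(A ^ (-q - 1))) * hode' + (-2 * q) * e1 + 2 * e2
  -- g = u / z^2 has zero derivative away from 0
  set g : ℝ → ℝ := fun z => u z / z ^ 2 with hg
  have hdg : ∀ z : ℝ, z ≠ 0 → HasDerivAt g 0 z := by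
    intro z hz
    have := (hdu z hz).div (hasDerivAt_pow 2 z) (pow_ne_zero 2 hz)
    refine HasDerivAt.congr_deriv (f := u / fun x => x ^ 2) this ?_
    have : (2 : ℕ) - 1 = 1 := rfl
    norm_num
    field_simp
    simp
  -- g constant on positives
  have hconst : ∀ z : ℝ, 0 < z → g z = g 1 := by
    intro z hz
    set a := min z 1 with ha'
    set c := max z 1 with hc'
    have ha : 0 < a := lt_min hz one_pos
    have hsub : ∀ x : ℝ, x ∈ Icc a c → x ≠ 0 := fun x hx => ne_of_gt (lt_of_lt_of_le ha hx.1)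
    have key := constant_of_has_deriv_right_zero
      (f := g) (a := a) (b := c)
      (fun x hx => ((hdg x (hsub x hx)).continuousAt.continuousWithinAt))
      (fun x hx => ((hdg x (hsub x (Ico_subset_Icc_self hx))).hasDerivWithinAt))
    have hz1 : z ∈ Icc a c := ⟨min_le_left _ _, le_max_left _ _⟩
    have h11 : (1 : ℝ) ∈ Icc a c := ⟨min_le_right _ _, le_max_right _ _⟩
    rw [key z hz1, key 1 h11]
  -- u z = b z^2 with b = u 1
  set b := u 1 with hb
  have hub : ∀ z : ℝ, u z = b * z ^ 2 := by
    have hpos' : ∀ z : ℝ, 0 < z → u z = b * z ^ 2 := by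
      intro z hz
      have := hconst z hz
      simp only [hg] at this
      rw [one_pow, div_one] at this
      field_simp at this
      linarith [this]
    intro z
    rcases lt_trichotomy z 0 with h | h | h
    · have hzz : u z = u (-z) := by
        simp only [hu]
        rw [heven z]
      rw [hzz, hpos' (-z) (by linarith)]
      ring
    · rw [h, hu0]; ring
    · exact hpos' z h
  -- the formula
  have hA : ∀ z : ℝ, φ z ^ (-q) = q + b * z ^ 2 := by
    intro z
    have := hub z
    simp only [hu] at this
    linarith
  clear_value b
  refine ⟨b, ?_, ?_⟩
  · intro z
    have h1 : (φ z ^ (-q)) ^ (-(1/q)) = φ z := by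
      rw [← Real.rpow_mul (hpos z).le]
      have : -q * -(1/q) = 1 := by field_simp
      rw [this, Real.rpow_one]
    rw [← h1, hA z]
  · intro _ hnc
    by_contra hble
    push_neg at hble
    rcases eq_or_lt_of_le hble with hb0 | hblt
    · exact hnc ⟨q ^ (-(1/q)), by
        intro z
        have := hA z
        rw [hb0] at this
        simp at this
        have h1 : (φ z ^ (-q)) ^ (-(1/q)) = φ z := by
          rw [← Real.rpow_mul (hpos z).le]
          have : -q * -(1/q) = 1 := by field_simp
          rw [this, Real.rpow_one]
        rw [← h1, this]⟩
    · set z := Real.sqrt (p / (-b)) with hz'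
      have hbne : b ≠ 0 := ne_of_lt hblt
      have hzsq : z ^ 2 = p / (-b) :=
        Real.sq_sqrt (div_nonneg (by linarith) (by linarith))
      have hval : q + b * z ^ 2 = -1 := by
        rw [hzsq, hqdef]
        field_simp
        ring
      have := hA z
      rw [hval] at this
      have := Real.rpow_pos_of_pos (hpos z) (-q)
      linarith
end

section
/- Let c > 0, 1 < q < 2, and suppose w : [s₀, ∞) → ℝ is C¹, negative, tends to 0 at infinity, and satisfies w'(s) = c|w(s)|^q (1 + ε(s)) where ε(s) → 0 as s → ∞. Then s^{1/(q−1)} w(s) → −[(q−1)c]^{-1/(q−1)} as s → ∞. -/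
open Filter Set Real

lemma tendsto_div_of_deriv_tendsto {u u' : ℝ → ℝ} {L a : ℝ}
    (hd : ∀ s, a ≤ s → HasDerivAt u (u' s) s)
    (h : Filter.Tendsto u' Filter.atTop (nhds L)) :
    Filter.Tendsto (fun s => u s / s) Filter.atTop (nhds L) := by
  rw [Metric.tendsto_atTop] at h ⊢
  intro δ hδ
  obtain ⟨S₀, hS₀⟩ := h (δ/4) (by positivity)
  set S : ℝ := max 0 (max a S₀) with hS
  have hSa : a ≤ S := le_max_of_le_right (le_max_left _ _)
  have hSS₀ : S₀ ≤ S := le_max_of_le_right (le_max_right _ _)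
  have hS0 : 0 ≤ S := le_max_left _ _
  have key : ∀ s, S ≤ s → |u s - L * s - (u S - L * S)| ≤ δ/4 * (s - S) := by
    intro s hs
    have := norm_image_sub_le_of_norm_deriv_le_segment'
      (f := fun t => u t - L * t) (f' := fun t => u' t - L) (a := S) (b := s) (C := δ/4)
      (fun x hx => (((hd x (hSa.trans hx.1)).sub ((hasDerivAt_id x).const_mul L)).congr_deriv
        (by ring)).hasDerivWithinAt)
      (fun x hx => by
        have := hS₀ x (hSS₀.trans hx.1)
        rw [Real.dist_eq] at this
        exact le_of_lt this)
      s (by exact ⟨hs, le_refl s⟩)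
    simpa [Real.norm_eq_abs, mul_comm] using this
  refine ⟨max (S + 1) (|u S - L * S| / (δ/2) + 1), fun s hs => ?_⟩
  have hs1 : S + 1 ≤ s := le_trans (le_max_left _ _) hs
  have hs2 : |u S - L * S| / (δ/2) + 1 ≤ s := le_trans (le_max_right _ _) hs
  have hspos : 0 < s := by linarith
  have h1 : |u s - L * s| ≤ |u S - L * S| + δ/4 * (s - S) := by
    have := key s (by linarith)
    have := abs_sub_abs_le_abs_sub (u s - L * s) (u S - L * S)
    have h3 := abs_sub (u s - L * s) (u S - L * S)
    calc |u s - L * s| ≤ |u s - L * s - (u S - L * S)| + |u S - L * S| := by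
          have := abs_sub_abs_le_abs_sub (u s - L * s) (u S - L * S); 
          nlinarith [abs_nonneg (u s - L * s - (u S - L * S)), key s (by linarith),
            abs_abs_sub_abs_le_abs_sub (u s - L*s) (u S - L*S)]
      _ ≤ |u S - L * S| + δ/4 * (s - S) := by linarith [key s (by linarith)]
  rw [Real.dist_eq]
  have heq : u s / s - L = (u s - L * s) / s := by field_simp
  rw [heq, abs_div, abs_of_pos hspos]
  rw [div_lt_iff₀ hspos]
  have h4 : |u S - L * S| ≤ δ/2 * (s - 1) := by
    rw [div_add' _ _ _ (by positivity : (δ:ℝ)/2 ≠ 0)] at hs2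
    rw [div_le_iff₀ (by positivity : (0:ℝ) < δ/2)] at hs2
    nlinarith
  nlinarith [abs_nonneg (u S - L * S)]

theorem ode_asymptotics (c q s₀ : ℝ) (hc : 0 < c) (hq1 : 1 < q) (hq2 : q < 2)
    (w ε : ℝ → ℝ)
    (hw : ContDiffOn ℝ 1 w (Set.Ici s₀))
    (hneg : ∀ s ∈ Set.Ici s₀, w s < 0)
    (hlim : Filter.Tendsto w Filter.atTop (nhds 0))
    (hε : Filter.Tendsto ε Filter.atTop (nhds 0))
    (hode : ∀ s ∈ Set.Ici s₀, deriv w s = c * |w s| ^ q * (1 + ε s)) :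
    Filter.Tendsto (fun s => s ^ (1/(q-1)) * w s) Filter.atTop
      (nhds (-((q-1)*c) ^ (-(1/(q-1))))) := by
  have hq1' : (0:ℝ) < q - 1 := by linarith
  set e : ℝ := 1/(q-1) with he
  set u : ℝ → ℝ := fun s => (-(w s)) ^ (1 - q) with hu
  set u' : ℝ → ℝ := fun s => (q-1) * c * (1 + ε s) with hu'
  have hwpos : ∀ s, s₀ ≤ s → 0 < -(w s) := fun s hs => by linarith [hneg s hs]
  have hd : ∀ s, s₀ + 1 ≤ s → HasDerivAt u (u' s) s := by
    intro s hs
    have hss : s₀ < s := by linarith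
    have hmem : Set.Ici s₀ ∈ nhds s := Ici_mem_nhds hss
    have hdw : DifferentiableAt ℝ w s := (hw.contDiffAt hmem).differentiableAt one_ne_zero
    have hderiv : HasDerivAt w (c * (-(w s)) ^ q * (1 + ε s)) s := by
      have h0 := hdw.hasDerivAt
      rw [hode s hss.le, abs_of_neg (hneg s hss.le)] at h0
      exact h0
    have hne : -(w s) ≠ 0 := ne_of_gt (hwpos s hss.le)
    have h3 := (hderiv.neg).rpow_const (p := 1 - q) (Or.inl hne)
    have hpow : (-(w s)) ^ q * (-(w s)) ^ (1 - q - 1) = 1 := by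
      rw [← Real.rpow_add (hwpos s hss.le)]; norm_num
    have key : -(c * (-(w s)) ^ q * (1 + ε s)) * (1-q) * (-(w s)) ^ (1 - q - 1)
        = (q-1) * c * (1 + ε s) * ((-(w s)) ^ q * (-(w s)) ^ (1 - q - 1)) := by ring
    have : u' s = -(c * (-(w s)) ^ q * (1 + ε s)) * (1-q) * (-(w s)) ^ (1 - q - 1) := by
      rw [key, hpow, mul_one]
    rw [this]
    exact h3
  have hL : Filter.Tendsto u' Filter.atTop (nhds ((q-1)*c)) := by
    have := (Filter.Tendsto.add (tendsto_const_nhds (x := (1:ℝ))) hε).const_mul ((q-1)*c)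
    simpa using this
  have hdiv : Filter.Tendsto (fun s => u s / s) Filter.atTop (nhds ((q-1)*c)) :=
    tendsto_div_of_deriv_tendsto hd hL
  have hLpos : 0 < (q-1)*c := mul_pos hq1' hc
  have hfinal : Filter.Tendsto (fun s => -((u s / s) ^ (-e))) Filter.atTop
      (nhds (-(((q-1)*c) ^ (-e)))) :=
    (hdiv.rpow_const (Or.inl hLpos.ne')).neg
  refine hfinal.congr' ?_
  filter_upwards [Filter.eventually_ge_atTop (max (s₀ + 1) 1)] with s hs
  have hs1 : s₀ ≤ s := by have := le_trans (le_max_left _ _) hs; linarith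
  have hspos : (0:ℝ) < s := lt_of_lt_of_le one_pos (le_trans (le_max_right _ _) hs)
  have hwp : 0 < -(w s) := hwpos s hs1
  have hup : 0 ≤ u s := Real.rpow_nonneg hwp.le _
  have h1 : (u s / s) ^ (-e) = (u s) ^ (-e) * s ^ e := by
    rw [div_eq_mul_inv, Real.mul_rpow hup (inv_nonneg.2 hspos.le),
      Real.inv_rpow hspos.le, Real.rpow_neg hspos.le, inv_inv]
  have h2 : (u s) ^ (-e) = -(w s) := by
    rw [hu, ← Real.rpow_mul hwp.le]
    have : (1 - q) * (-e) = 1 := by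
      rw [he]; field_simp; ring
    rw [this, Real.rpow_one]
  rw [h1, h2]
  ring
end
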